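/- Let k and ℓ be integers with 2 ≤ k ≤ ℓ and let F_{k,ℓ} be the graph described in the context. Then for every choice of vertices x_i ∈ {t_{i,1}, t_{i,2}} for i = 1,…,k−1, the set {u, x_1,…,x_{k−1}} is a total dominating set of F_{k,ℓ} of cardinality k. -/
import Mathlib


/-- Vertices of `F_{k,ℓ}`: triangle vertices `t_{i,j}` as `Sum.inl (i,j)`
(0-indexed, `i : Fin (k+ℓ-2)`, `j : Fin 3`), and `u = Sum.inr false`,
`v = Sum.inr true`. -/
abbrev FklV (k l : ℕ) := (Fin (k + l - 2) × Fin 3) ⊕ Bool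

/-- Edge relation of `F_{k,ℓ}`: triangles on each `t_{i,·}`; `u` adjacent to
`t_{i,1}`, `t_{i,2}` (0-indexed `j ∈ {0,1}`) for all `i` and to `t_{i,3}` for
`i ≥ k` (0-indexed `k-1 ≤ i.val`); `v` adjacent to `t_{i,1}`, `t_{i,2}` for
all `i` and to `t_{i,3}` for `i ≤ k-1` (0-indexed `i.val < k-1`); `u` and `v`
nonadjacent. -/
def FklRel (k l : ℕ) : FklV k l → FklV k l → Prop
  | .inl p, .inl q => p.1 = q.1
  | .inr false, .inl p =>
      p.2.val = 0 ∨ p.2.val = 1 ∨ (k - 1 ≤ p.1.val ∧ p.2.val = 2)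
  | .inr true, .inl p =>
      p.2.val = 0 ∨ p.2.val = 1 ∨ (p.1.val < k - 1 ∧ p.2.val = 2)
  | _, _ => False

/-- The graph `F_{k,ℓ}`. -/
def Fkl (k l : ℕ) : SimpleGraph (FklV k l) := SimpleGraph.fromRel (FklRel k l)

/-- `D` is a total dominating set of `G`. -/
def IsTotalDomSet {V : Type*} (G : SimpleGraph V) (D : Finset V) : Prop :=
  ∀ v : V, ∃ d ∈ D, G.Adj v d

/-- For every choice `x_i ∈ {t_{i,1}, t_{i,2}}` for `i = 1, …, k-1` (0-indexed
`i.val < k-1`), the set `{u, x_1, …, x_{k-1}}` is a total dominating set of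
`F_{k,ℓ}` of cardinality `k`. -/
theorem stmt18 (k l : ℕ) (hk : 2 ≤ k) (hkl : k ≤ l)
    (c : Fin (k + l - 2) → Fin 3)
    (hc : ∀ i, i.val < k - 1 → (c i).val = 0 ∨ (c i).val = 1)
    (D : Finset (FklV k l))
    (hDdef : D = insert (Sum.inr false)
      (Finset.image (fun i => Sum.inl (i, c i))
        (Finset.univ.filter (fun i : Fin (k + l - 2) => i.val < k - 1)))) :
    IsTotalDomSet (Fkl k l) D ∧ D.card = k := by
  subst hDdef
  have h0 : 0 < k + l - 2 := by omega
  set i0 : Fin (k + l - 2) := ⟨0, h0⟩ with hi0def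
  have hi0 : i0.val < k - 1 := by simp [hi0def]; omega
  have memx : ∀ i : Fin (k + l - 2), i.val < k - 1 →
      (Sum.inl (i, c i) : FklV k l) ∈ insert (Sum.inr false)
      (Finset.image (fun i => Sum.inl (i, c i))
        (Finset.univ.filter (fun i : Fin (k + l - 2) => i.val < k - 1))) := by
    intro i hi
    apply Finset.mem_insert_of_mem
    simp only [Finset.mem_image, Finset.mem_filter, Finset.mem_univ, true_and]
    exact ⟨i, hi, rfl⟩
  have memu : (Sum.inr false : FklV k l) ∈ insert (Sum.inr false)
      (Finset.image (fun i => Sum.inl (i, c i))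
        (Finset.univ.filter (fun i : Fin (k + l - 2) => i.val < k - 1))) :=
    Finset.mem_insert_self _ _
  constructor
  · intro w
    match w with
    | .inr false =>
        refine ⟨Sum.inl (i0, c i0), memx i0 hi0, ?_⟩
        rw [Fkl, SimpleGraph.fromRel_adj]
        refine ⟨by simp, Or.inl ?_⟩
        rcases hc i0 hi0 with h | h
        · exact Or.inl h
        · exact Or.inr (Or.inl h)
    | .inr true =>
        refine ⟨Sum.inl (i0, c i0), memx i0 hi0, ?_⟩
        rw [Fkl, SimpleGraph.fromRel_adj]
        refine ⟨by simp, Or.inl ?_⟩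
        rcases hc i0 hi0 with h | h
        · exact Or.inl h
        · exact Or.inr (Or.inl h)
    | .inl (i, j) =>
        by_cases hi : i.val < k - 1
        · by_cases hj : j = c i
          · refine ⟨Sum.inr false, memu, ?_⟩
            rw [Fkl, SimpleGraph.fromRel_adj]
            refine ⟨by simp, Or.inr ?_⟩
            rcases hc i hi with h | h
            · exact Or.inl (by simp [hj, h])
            · exact Or.inr (Or.inl (by simp [hj, h]))
          · refine ⟨Sum.inl (i, c i), memx i hi, ?_⟩
            rw [Fkl, SimpleGraph.fromRel_adj]
            exact ⟨by simp [hj], Or.inl rfl⟩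
        · refine ⟨Sum.inr false, memu, ?_⟩
          rw [Fkl, SimpleGraph.fromRel_adj]
          refine ⟨by simp, Or.inr ?_⟩
          have hj3 : j.val = 0 ∨ j.val = 1 ∨ j.val = 2 := by have := j.isLt; omega
          rcases hj3 with h | h | h
          · exact Or.inl h
          · exact Or.inr (Or.inl h)
          · exact Or.inr (Or.inr ⟨Nat.le_of_not_lt hi, h⟩)
  · have hne : (Sum.inr false : FklV k l) ∉
        Finset.image (fun i => Sum.inl (i, c i))
          (Finset.univ.filter (fun i : Fin (k + l - 2) => i.val < k - 1)) := by
      simp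
    rw [Finset.card_insert_of_notMem hne,
      Finset.card_image_of_injective _ (fun a b h => (Prod.ext_iff.mp (Sum.inl.inj h)).1)]
    have hfe : (Finset.univ.filter (fun i : Fin (k + l - 2) => i.val < k - 1)) =
        Finset.Iio (⟨k - 1, by omega⟩ : Fin (k + l - 2)) := by
      ext x
      simp [Fin.lt_def]
    rw [hfe, Fin.card_Iio]
    simp
    omega
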